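/- (Theorem 4.1, simple exclusion in a Jackson-type environment, closed-open network, detailed balance) Fix M with 1 ≤ M ≤ #Λ. Suppose for every y : Λ → {0,1}: (4.2a) λ_k(n_k−1;y)/μ_k(n_k;y) · β_{kl}(n_k,n_l;y) = λ_l(n_l;y)/μ_l(n_l+1;y) · β_{lk}(n_l+1,n_k−1;y) for k ≠ l with y_k = y_l = 0 and n_k ≥ 1; (4.2b) λ_j(n_j−1;y)/μ_j(n_j;y) · θ_{jk}(n_j,n_k;y) = λ_k(n_k;y)/μ_k(n_k+1;y) · θ_{kj}(n_k+1,n_j−1;y) for y_j = 1, y_k = 0, n_j ≥ 1; (4.3) τ_{jj'}(n;y) · ∏_{q∈Λ} λ̄_q(n_q;y)/μ̄_q(n_q;y) = τ_{j'j}(n;y+e^{j→j'}) · ∏_{q∈Λ} λ̄_q(n_q;y+e^{j→j'})/μ̄_q(n_q;y+e^{j→j'}) for y_j = 1, y_{j'} = 0; (4.4) λ_i(n_i−1;y)γ_i(n_i−1)/μ_i(n_i;y) · ε_{ij}(n_i,n_j;y) = λ_j(n_j;y)γ_j(n_j)/μ_j(n_j+1;y) · ε_{ji}(n_j+1,n_i−1;y)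 for i ≠ j with y_i = y_j = 1 and n_i ≥ 1. Then the weight w(y,n) = 1(|y| = M) · ∏_{q∈Λ} [λ̄_q(n_q;y)/μ̄_q(n_q;y)] · ∏_{j : y_j = 1} γ̄_j(n_j) satisfies the detailed balance equations: (i) w(y,n)·λ_p(n_p;y)·[γ_p(n_p)]^{y_p} = w(y, n+e^p)·μ_p(n_p+1;y) for every p ∈ Λ; (ii) w(y,n)·β_{kl}(n_k,n_l;y) = w(y, n+e^{k→l})·β_{lk}(n_l+1,n_k−1;y) for y_k = y_l = 0, k ≠ l, n_k ≥ 1; (iii) w(y,n)·ε_{ij}(n_i,n_j;y) = w(y, n+e^{i→j})·ε_{ji}(n_j+1,n_i−1;y) for y_i = y_j = 1, i ≠ j, n_i ≥ 1; (iv) w(y,n)·θ_{jk}(n_j,n_k;y) = w(y, n+e^{j→k})·θ_{kj}(n_k+1,n_j−1;y)·γ_j(n_j−1) for y_j = 1, y_k = 0, n_j ≥ 1; (v) w(y,n)·γ̄_j(n_j)^{−1}·τ_{jj'}(n;y) = w(y+e^{j→j'}, n)·γ̄_{j'}(n_{j'})^{−1}·τ_{j'j}(n;y+e^{j→j'}) for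 y_j = 1, y_{j'} = 0. -/

import Mathlib

open Finset
lemma prod_split_one {Λ : Type*} [Fintype Λ] [DecidableEq Λ]
    (f g : Λ → ℝ) (p : Λ) (h : ∀ q, q ≠ p → f q = g q) :
    ∏ q, f q = f p * ∏ q ∈ univ.erase p, g q := by
  rw [← Finset.mul_prod_erase univ f (mem_univ p)]
  congr 1
  exact Finset.prod_congr rfl fun q hq => h q (Finset.ne_of_mem_erase hq)

lemma prod_split_two {Λ : Type*} [Fintype Λ] [DecidableEq Λ]
    (f g : Λ → ℝ) (k l : Λ) (hlk : l ≠ k) (h : ∀ q, q ≠ k → q ≠ l → f q = g q) :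
    ∏ q, f q = f k * (f l * ∏ q ∈ (univ.erase k).erase l, g q) := by
  rw [← Finset.mul_prod_erase univ f (mem_univ k),
      ← Finset.mul_prod_erase (univ.erase k) f (Finset.mem_erase.2 ⟨hlk, mem_univ l⟩)]
  congr 2
  exact Finset.prod_congr rfl fun q hq =>
    h q (Finset.mem_erase.1 (Finset.mem_of_mem_erase hq)).1 (Finset.ne_of_mem_erase hq)

lemma prod_split_one' {Λ : Type*} [DecidableEq Λ] (s : Finset Λ)
    (f g : Λ → ℝ) (p : Λ) (hp : p ∈ s) (h : ∀ q ∈ s, q ≠ p → f q = g q) :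
    ∏ q ∈ s, f q = f p * ∏ q ∈ s.erase p, g q := by
  rw [← Finset.mul_prod_erase s f hp]
  congr 1
  exact Finset.prod_congr rfl fun q hq =>
    h q (Finset.mem_of_mem_erase hq) (Finset.ne_of_mem_erase hq)

lemma prod_split_two' {Λ : Type*} [DecidableEq Λ] (s : Finset Λ)
    (f g : Λ → ℝ) (k l : Λ) (hk : k ∈ s) (hl : l ∈ s) (hlk : l ≠ k)
    (h : ∀ q ∈ s, q ≠ k → q ≠ l → f q = g q) :
    ∏ q ∈ s, f q = f k * (f l * ∏ q ∈ (s.erase k).erase l, g q) := by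
  rw [← Finset.mul_prod_erase s f hk,
      ← Finset.mul_prod_erase (s.erase k) f (Finset.mem_erase.2 ⟨hlk, hl⟩)]
  congr 2
  exact Finset.prod_congr rfl fun q hq =>
    h q (Finset.mem_of_mem_erase (Finset.mem_of_mem_erase hq))
      (Finset.mem_erase.1 (Finset.mem_of_mem_erase hq)).1 (Finset.ne_of_mem_erase hq)



/-- The `e^k` configuration increment: `n + e^k`. -/
def bump {Λ : Type*} [DecidableEq Λ] (n : Λ → ℕ) (k : Λ) : Λ → ℕ :=
  fun l => n l + (if l = k then 1 else 0)

/-- The jump move `n + e^{i→k} = n - e^i + e^k`. -/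
def move {Λ : Type*} [DecidableEq Λ] (n : Λ → ℕ) (i k : Λ) : Λ → ℕ :=
  fun l => n l - (if l = i then 1 else 0) + (if l = k then 1 else 0)

/-- Theorem 4.1, simple exclusion, closed-open network, detailed
balance: under symmetry conditions (4.2)-(4.4), the weights
`w(y,n) = 1(|y|=M) ∏_q [λ̄_q(n_q;y)/μ̄_q(n_q;y)] ∏_{j:y_j=1} γ̄_j(n_j)` satisfy
detailed balance. Occupation configurations `y : Λ → {0,1}` are encoded as
`y : Λ → ℕ` with `∀ s, y s ≤ 1`. -/
theorem exclusion_closed_open_detailed_balance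
    (Λ : Type*) [Fintype Λ] [DecidableEq Λ] [Nonempty Λ]
    (M : ℕ) (hM1 : 1 ≤ M) (hM2 : M ≤ Fintype.card Λ)
    (lam mu : Λ → ℕ → (Λ → ℕ) → ℝ) (gam : Λ → ℕ → ℝ)
    (hlam : ∀ p m y, 0 ≤ lam p m y) (hmu : ∀ p m y, 0 < mu p m y)
    (hgam : ∀ p m, 0 < gam p m) (hgam0 : ∀ p, gam p 0 = 1)
    (lamBar muBar : Λ → ℕ → (Λ → ℕ) → ℝ) (gamBar : Λ → ℕ → ℝ)
    (hlamBar : ∀ p m y, lamBar p m y = ∏ u ∈ Finset.range m, lam p u y)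
    (hmuBar : ∀ p m y, muBar p m y = ∏ u ∈ Finset.range m, mu p (u + 1) y)
    (hgamBar : ∀ p m, gamBar p m = ∏ u ∈ Finset.range m, gam p u)
    (β θ ε : Λ → Λ → ℕ → ℕ → (Λ → ℕ) → ℝ) (τ : Λ → Λ → (Λ → ℕ) → (Λ → ℕ) → ℝ)
    (hβnn : ∀ k l a b y, 0 ≤ β k l a b y) (hθnn : ∀ j k a b y, 0 ≤ θ j k a b y)
    (hεnn : ∀ i j a b y, 0 ≤ ε i j a b y) (hτnn : ∀ j j' n y, 0 ≤ τ j j' n y)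
    -- (4.2a)
    (h42a : ∀ (y : Λ → ℕ), (∀ s, y s ≤ 1) → ∀ (k l : Λ) (a b : ℕ),
      k ≠ l → y k = 0 → y l = 0 → 1 ≤ a →
      lam k (a - 1) y / mu k a y * β k l a b y =
        lam l b y / mu l (b + 1) y * β l k (b + 1) (a - 1) y)
    -- (4.2b)
    (h42b : ∀ (y : Λ → ℕ), (∀ s, y s ≤ 1) → ∀ (j k : Λ) (a b : ℕ),
      y j = 1 → y k = 0 → 1 ≤ a →
      lam j (a - 1) y / mu j a y * θ j k a b y =
        lam k b y / mu k (b + 1) y * θ k j (b + 1) (a - 1) y)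
    -- (4.3)
    (h43 : ∀ (y : Λ → ℕ), (∀ s, y s ≤ 1) → ∀ (j j' : Λ) (n : Λ → ℕ),
      y j = 1 → y j' = 0 →
      τ j j' n y * ∏ q, lamBar q (n q) y / muBar q (n q) y =
        τ j' j n (move y j j') *
          ∏ q, lamBar q (n q) (move y j j') / muBar q (n q) (move y j j'))
    -- (4.4)
    (h44 : ∀ (y : Λ → ℕ), (∀ s, y s ≤ 1) → ∀ (i j : Λ) (a b : ℕ),
      i ≠ j → y i = 1 → y j = 1 → 1 ≤ a →
      lam i (a - 1) y * gam i (a - 1) / mu i a y * ε i j a b y =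
        lam j b y * gam j b / mu j (b + 1) y * ε j i (b + 1) (a - 1) y)
    (w : (Λ → ℕ) → (Λ → ℕ) → ℝ)
    (hw : ∀ (y n : Λ → ℕ), w y n =
      (if ∑ s, y s = M then (1 : ℝ) else 0) *
        (∏ q, lamBar q (n q) y / muBar q (n q) y) *
        ∏ j ∈ Finset.univ.filter (fun j => y j = 1), gamBar j (n j)) :
    ∀ (y : Λ → ℕ), (∀ s, y s ≤ 1) → ∀ n : Λ → ℕ,
      -- (i) arrival at p paired with exit from p
      (∀ p, w y n * (lam p (n p) y * gam p (n p) ^ (y p)) =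
        w y (bump n p) * mu p (n p + 1) y) ∧
      -- (ii) task jump between unloaded sites
      (∀ k l, y k = 0 → y l = 0 → k ≠ l → 1 ≤ n k →
        w y n * β k l (n k) (n l) y =
          w y (move n k l) * β l k (n l + 1) (n k - 1) y) ∧
      -- (iii) task jump between loaded sites
      (∀ i j, y i = 1 → y j = 1 → i ≠ j → 1 ≤ n i →
        w y n * ε i j (n i) (n j) y =
          w y (move n i j) * ε j i (n j + 1) (n i - 1) y) ∧
      -- (iv) task jump from a loaded to an unloaded site
      (∀ j k, y j = 1 → y k = 0 → 1 ≤ n j →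
        w y n * θ j k (n j) (n k) y =
          w y (move n j k) * (θ k j (n k + 1) (n j - 1) y * gam j (n j - 1))) ∧
      -- (v) leap of a distinguished customer
      (∀ j j', y j = 1 → y j' = 0 →
        w y n * (gamBar j (n j))⁻¹ * τ j j' n y =
          w (move y j j') n * (gamBar j' (n j'))⁻¹ * τ j' j n (move y j j')) := by
  intro y hy n
  have hmuBne : ∀ (p : Λ) (m : ℕ) (z : Λ → ℕ), muBar p m z ≠ 0 := by
    intro p m z
    rw [hmuBar]
    exact ne_of_gt (Finset.prod_pos fun u _ => hmu p (u + 1) z)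
  have hgBne : ∀ (p : Λ) (m : ℕ), gamBar p m ≠ 0 := by
    intro p m
    rw [hgamBar]
    exact ne_of_gt (Finset.prod_pos fun u _ => hgam p u)
  have hlamS : ∀ (p : Λ) (m : ℕ) (z : Λ → ℕ),
      lamBar p (m + 1) z = lamBar p m z * lam p m z := by
    intro p m z; rw [hlamBar, hlamBar, Finset.prod_range_succ]
  have hmuS : ∀ (p : Λ) (m : ℕ) (z : Λ → ℕ),
      muBar p (m + 1) z = muBar p m z * mu p (m + 1) z := by
    intro p m z; rw [hmuBar, hmuBar, Finset.prod_range_succ]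
  have hgamS : ∀ (p : Λ) (m : ℕ), gamBar p (m + 1) = gamBar p m * gam p m := by
    intro p m; rw [hgamBar, hgamBar, Finset.prod_range_succ]
  refine ⟨?_, ?_, ?_, ?_, ?_⟩
  · -- (i)
    intro p
    have hb : ∀ q, q ≠ p → bump n p q = n q := fun q hq => by simp [bump, hq]
    have hbp : bump n p p = n p + 1 := by simp [bump]
    have hP1 : ∏ q, lamBar q (n q) y / muBar q (n q) y
        = (lamBar p (n p) y / muBar p (n p) y) *
          ∏ q ∈ univ.erase p, lamBar q (n q) y / muBar q (n q) y :=
      prod_split_one _ _ p fun q _ => rfl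
    have hP2 : ∏ q, lamBar q (bump n p q) y / muBar q (bump n p q) y
        = (lamBar p (n p + 1) y / muBar p (n p + 1) y) *
          ∏ q ∈ univ.erase p, lamBar q (n q) y / muBar q (n q) y := by
      rw [prod_split_one (fun q => lamBar q (bump n p q) y / muBar q (bump n p q) y)
        (fun q => lamBar q (n q) y / muBar q (n q) y) p
        (fun q hq => by simp only [hb q hq])]
      simp only [hbp]
    have key : lamBar p (n p + 1) y / muBar p (n p + 1) y * mu p (n p + 1) y
        = lamBar p (n p) y / muBar p (n p) y * lam p (n p) y := by
      rw [hlamS, hmuS, ← div_div, div_mul_cancel₀ _ (ne_of_gt (hmu p (n p + 1) y)),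
        mul_div_right_comm]
    rcases Nat.le_one_iff_eq_zero_or_eq_one.1 (hy p) with hyp | hyp
    · have hG2 : ∏ j ∈ univ.filter (fun j => y j = 1), gamBar j (bump n p j)
          = ∏ j ∈ univ.filter (fun j => y j = 1), gamBar j (n j) :=
        Finset.prod_congr rfl fun j hj => by
          have hj1 : y j = 1 := (Finset.mem_filter.1 hj).2
          rw [hb j (by rintro rfl; omega)]
      rw [hw, hw, hP1, hP2, hG2, hyp, pow_zero]
      linear_combination (-((if ∑ s, y s = M then (1:ℝ) else 0) *
        (∏ q ∈ univ.erase p, lamBar q (n q) y / muBar q (n q) y) *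
        (∏ j ∈ univ.filter (fun j => y j = 1), gamBar j (n j)))) * key
    · have hpf : p ∈ univ.filter (fun j => y j = 1) :=
        Finset.mem_filter.2 ⟨Finset.mem_univ p, hyp⟩
      have hG1 : ∏ j ∈ univ.filter (fun j => y j = 1), gamBar j (n j)
          = gamBar p (n p) *
            ∏ j ∈ (univ.filter (fun j => y j = 1)).erase p, gamBar j (n j) :=
        prod_split_one' _ _ _ p hpf fun q _ _ => rfl
      have hG2 : ∏ j ∈ univ.filter (fun j => y j = 1), gamBar j (bump n p j)
          = gamBar p (n p + 1) *
            ∏ j ∈ (univ.filter (fun j => y j = 1)).erase p, gamBar j (n j) := by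
        rw [prod_split_one' _ (fun j => gamBar j (bump n p j)) (fun j => gamBar j (n j))
          p hpf (fun q _ hq => by simp only [hb q hq])]
        simp only [hbp]
      rw [hw, hw, hP1, hP2, hG1, hG2, hyp, pow_one, hgamS]
      linear_combination (-((if ∑ s, y s = M then (1:ℝ) else 0) *
        (∏ q ∈ univ.erase p, lamBar q (n q) y / muBar q (n q) y) *
        gamBar p (n p) * gam p (n p) *
        (∏ j ∈ (univ.filter (fun j => y j = 1)).erase p, gamBar j (n j)))) * key
  · -- (ii)
    intro k l hk hl hkl hnk
    have hmv : ∀ q, q ≠ k → q ≠ l → move n k l q = n q := fun q h1 h2 => by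
      simp [move, h1, h2]
    have hmk : move n k l k = n k - 1 := by simp [move, hkl]
    have hml : move n k l l = n l + 1 := by simp [move, Ne.symm hkl]
    obtain ⟨c, hc⟩ : ∃ c, n k = c + 1 := ⟨n k - 1, (Nat.succ_pred_eq_of_pos hnk).symm⟩
    have hc1 : n k - 1 = c := by omega
    have hP1 : ∏ q, lamBar q (n q) y / muBar q (n q) y
        = (lamBar k (n k) y / muBar k (n k) y) *
          ((lamBar l (n l) y / muBar l (n l) y) *
            ∏ q ∈ (univ.erase k).erase l, lamBar q (n q) y / muBar q (n q) y) :=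
      prod_split_two _ _ k l (Ne.symm hkl) fun q _ _ => rfl
    have hP2 : ∏ q, lamBar q (move n k l q) y / muBar q (move n k l q) y
        = (lamBar k c y / muBar k c y) *
          ((lamBar l (n l + 1) y / muBar l (n l + 1) y) *
            ∏ q ∈ (univ.erase k).erase l, lamBar q (n q) y / muBar q (n q) y) := by
      rw [prod_split_two (fun q => lamBar q (move n k l q) y / muBar q (move n k l q) y)
        (fun q => lamBar q (n q) y / muBar q (n q) y) k l (Ne.symm hkl)
        (fun q h1 h2 => by simp only [hmv q h1 h2])]
      simp only [hmk, hml, hc1]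
    have hG : ∏ j ∈ univ.filter (fun j => y j = 1), gamBar j (move n k l j)
        = ∏ j ∈ univ.filter (fun j => y j = 1), gamBar j (n j) :=
      Finset.prod_congr rfl fun j hj => by
        have hj1 : y j = 1 := (Finset.mem_filter.1 hj).2
        rw [hmv j (by rintro rfl; omega) (by rintro rfl; omega)]
    have key := h42a y hy k l (n k) (n l) hkl hk hl hnk
    rw [hc1, hc] at key
    rw [hw, hw, hP1, hP2, hG, hc1, hc]
    simp only [hlamS, hmuS]
    linear_combination ((if ∑ s, y s = M then (1:ℝ) else 0) *
      (∏ q ∈ (univ.erase k).erase l, lamBar q (n q) y / muBar q (n q) y) *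
      (∏ j ∈ univ.filter (fun j => y j = 1), gamBar j (n j)) *
      (lamBar k c y / muBar k c y) * (lamBar l (n l) y / muBar l (n l) y)) * key
  · -- (iii)
    intro i j hi hj hij hni
    have hmv : ∀ q, q ≠ i → q ≠ j → move n i j q = n q := fun q h1 h2 => by
      simp [move, h1, h2]
    have hmi : move n i j i = n i - 1 := by simp [move, hij]
    have hmj : move n i j j = n j + 1 := by simp [move, Ne.symm hij]
    obtain ⟨c, hc⟩ : ∃ c, n i = c + 1 := ⟨n i - 1, (Nat.succ_pred_eq_of_pos hni).symm⟩
    have hc1 : n i - 1 = c := by omega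
    have hif : i ∈ univ.filter (fun q => y q = 1) :=
      Finset.mem_filter.2 ⟨Finset.mem_univ i, hi⟩
    have hjf : j ∈ univ.filter (fun q => y q = 1) :=
      Finset.mem_filter.2 ⟨Finset.mem_univ j, hj⟩
    have hP1 : ∏ q, lamBar q (n q) y / muBar q (n q) y
        = (lamBar i (n i) y / muBar i (n i) y) *
          ((lamBar j (n j) y / muBar j (n j) y) *
            ∏ q ∈ (univ.erase i).erase j, lamBar q (n q) y / muBar q (n q) y) :=
      prod_split_two _ _ i j (Ne.symm hij) fun q _ _ => rfl
    have hP2 : ∏ q, lamBar q (move n i j q) y / muBar q (move n i j q) y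
        = (lamBar i c y / muBar i c y) *
          ((lamBar j (n j + 1) y / muBar j (n j + 1) y) *
            ∏ q ∈ (univ.erase i).erase j, lamBar q (n q) y / muBar q (n q) y) := by
      rw [prod_split_two (fun q => lamBar q (move n i j q) y / muBar q (move n i j q) y)
        (fun q => lamBar q (n q) y / muBar q (n q) y) i j (Ne.symm hij)
        (fun q h1 h2 => by simp only [hmv q h1 h2])]
      simp only [hmi, hmj, hc1]
    have hG1 : ∏ q ∈ univ.filter (fun q => y q = 1), gamBar q (n q)
        = gamBar i (n i) * (gamBar j (n j) *
          ∏ q ∈ ((univ.filter (fun q => y q = 1)).erase i).erase j, gamBar q (n q)) :=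
      prod_split_two' _ _ _ i j hif hjf (Ne.symm hij) fun q _ _ _ => rfl
    have hG2 : ∏ q ∈ univ.filter (fun q => y q = 1), gamBar q (move n i j q)
        = gamBar i c * (gamBar j (n j + 1) *
          ∏ q ∈ ((univ.filter (fun q => y q = 1)).erase i).erase j, gamBar q (n q)) := by
      rw [prod_split_two' _ (fun q => gamBar q (move n i j q)) (fun q => gamBar q (n q))
        i j hif hjf (Ne.symm hij) (fun q _ h1 h2 => by simp only [hmv q h1 h2])]
      simp only [hmi, hmj, hc1]
    have key := h44 y hy i j (n i) (n j) hij hi hj hni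
    rw [hc1, hc] at key
    rw [hw, hw, hP1, hP2, hG1, hG2, hc1, hc]
    simp only [hlamS, hmuS, hgamS]
    linear_combination ((if ∑ s, y s = M then (1:ℝ) else 0) *
      (∏ q ∈ (univ.erase i).erase j, lamBar q (n q) y / muBar q (n q) y) *
      (∏ q ∈ ((univ.filter (fun q => y q = 1)).erase i).erase j, gamBar q (n q)) *
      (lamBar i c y / muBar i c y) * (lamBar j (n j) y / muBar j (n j) y) *
      gamBar i c * gamBar j (n j)) * key
  · -- (iv)
    intro j k hj hk hnj
    have hjk : j ≠ k := by rintro rfl; omega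
    have hmv : ∀ q, q ≠ j → q ≠ k → move n j k q = n q := fun q h1 h2 => by
      simp [move, h1, h2]
    have hmj : move n j k j = n j - 1 := by simp [move, hjk]
    have hmk : move n j k k = n k + 1 := by simp [move, Ne.symm hjk]
    obtain ⟨c, hc⟩ : ∃ c, n j = c + 1 := ⟨n j - 1, (Nat.succ_pred_eq_of_pos hnj).symm⟩
    have hc1 : n j - 1 = c := by omega
    have hjf : j ∈ univ.filter (fun q => y q = 1) :=
      Finset.mem_filter.2 ⟨Finset.mem_univ j, hj⟩
    have hP1 : ∏ q, lamBar q (n q) y / muBar q (n q) y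
        = (lamBar j (n j) y / muBar j (n j) y) *
          ((lamBar k (n k) y / muBar k (n k) y) *
            ∏ q ∈ (univ.erase j).erase k, lamBar q (n q) y / muBar q (n q) y) :=
      prod_split_two _ _ j k (Ne.symm hjk) fun q _ _ => rfl
    have hP2 : ∏ q, lamBar q (move n j k q) y / muBar q (move n j k q) y
        = (lamBar j c y / muBar j c y) *
          ((lamBar k (n k + 1) y / muBar k (n k + 1) y) *
            ∏ q ∈ (univ.erase j).erase k, lamBar q (n q) y / muBar q (n q) y) := by
      rw [prod_split_two (fun q => lamBar q (move n j k q) y / muBar q (move n j k q) y)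
        (fun q => lamBar q (n q) y / muBar q (n q) y) j k (Ne.symm hjk)
        (fun q h1 h2 => by simp only [hmv q h1 h2])]
      simp only [hmj, hmk, hc1]
    have hG1 : ∏ q ∈ univ.filter (fun q => y q = 1), gamBar q (n q)
        = gamBar j (n j) *
          ∏ q ∈ (univ.filter (fun q => y q = 1)).erase j, gamBar q (n q) :=
      prod_split_one' _ _ _ j hjf fun q _ _ => rfl
    have hG2 : ∏ q ∈ univ.filter (fun q => y q = 1), gamBar q (move n j k q)
        = gamBar j c *
          ∏ q ∈ (univ.filter (fun q => y q = 1)).erase j, gamBar q (n q) := by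
      rw [prod_split_one' _ (fun q => gamBar q (move n j k q)) (fun q => gamBar q (n q))
        j hjf (fun q hq hq1 => by
          have hq2 : y q = 1 := (Finset.mem_filter.1 hq).2
          simp only [hmv q hq1 (by rintro rfl; omega : q ≠ k)])]
      simp only [hmj, hc1]
    have key := h42b y hy j k (n j) (n k) hj hk hnj
    rw [hc1, hc] at key
    rw [hw, hw, hP1, hP2, hG1, hG2, hc1, hc]
    simp only [hlamS, hmuS, hgamS]
    linear_combination ((if ∑ s, y s = M then (1:ℝ) else 0) *
      (∏ q ∈ (univ.erase j).erase k, lamBar q (n q) y / muBar q (n q) y) *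
      (∏ q ∈ (univ.filter (fun q => y q = 1)).erase j, gamBar q (n q)) *
      (lamBar j c y / muBar j c y) * (lamBar k (n k) y / muBar k (n k) y) *
      gamBar j c * gam j c) * key
  · -- (v)
    intro j j' hj hj'
    have hjj' : j ≠ j' := by rintro rfl; omega
    have hsum : ∑ s, move y j j' s = ∑ s, y s := by
      have h1 : ∀ s, move y j j' s + (if s = j then 1 else 0)
          = y s + (if s = j' then 1 else 0) := by
        intro s
        by_cases h1 : s = j
        · subst h1; simp [move, hjj', hj]
        · by_cases h2 : s = j' <;> simp [move, h1, h2, Ne.symm hjj']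
      have h2 := Finset.sum_congr rfl fun s (_ : s ∈ (univ : Finset Λ)) => h1 s
      rw [Finset.sum_add_distrib, Finset.sum_add_distrib] at h2
      have hit : ∀ t : Λ, ∑ s, (if s = t then (1:ℕ) else 0) = 1 := fun t => by simp
      rw [hit, hit] at h2
      omega
    have hjS : j ∈ univ.filter (fun q => y q = 1) :=
      Finset.mem_filter.2 ⟨Finset.mem_univ j, hj⟩
    have hj'not : j' ∉ (univ.filter (fun q => y q = 1)).erase j := by
      intro h
      have := (Finset.mem_filter.1 (Finset.mem_of_mem_erase h)).2
      omega
    have hfil : univ.filter (fun q => move y j j' q = 1)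
        = insert j' ((univ.filter (fun q => y q = 1)).erase j) := by
      ext q
      simp only [Finset.mem_filter, Finset.mem_univ, true_and, Finset.mem_insert,
        Finset.mem_erase]
      by_cases h1 : q = j
      · subst h1; simp [move, hjj', hj]
      · by_cases h2 : q = j'
        · subst h2; simp [move, h1, hj']
        · simp [move, h1, h2]
    have hG1 : ∏ q ∈ univ.filter (fun q => y q = 1), gamBar q (n q)
        = gamBar j (n j) *
          ∏ q ∈ (univ.filter (fun q => y q = 1)).erase j, gamBar q (n q) :=
      (Finset.mul_prod_erase _ _ hjS).symm
    have hG2 : ∏ q ∈ univ.filter (fun q => move y j j' q = 1), gamBar q (n q)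
        = gamBar j' (n j') *
          ∏ q ∈ (univ.filter (fun q => y q = 1)).erase j, gamBar q (n q) := by
      rw [hfil, Finset.prod_insert hj'not]
    have key := h43 y hy j j' n hj hj'
    have c1 : gamBar j (n j) * (gamBar j (n j))⁻¹ = 1 := mul_inv_cancel₀ (hgBne j (n j))
    have c2 : gamBar j' (n j') * (gamBar j' (n j'))⁻¹ = 1 :=
      mul_inv_cancel₀ (hgBne j' (n j'))
    rw [hw, hw, hsum, hG1, hG2]
    linear_combination ((if ∑ s, y s = M then (1:ℝ) else 0) *
        (∏ q ∈ (univ.filter (fun q => y q = 1)).erase j, gamBar q (n q)) *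
        (τ j j' n y) * (∏ q, lamBar q (n q) y / muBar q (n q) y)) * c1
      - ((if ∑ s, y s = M then (1:ℝ) else 0) *
        (∏ q ∈ (univ.filter (fun q => y q = 1)).erase j, gamBar q (n q)) *
        (τ j' j n (move y j j')) *
        (∏ q, lamBar q (n q) (move y j j') / muBar q (n q) (move y j j'))) * c2
      + ((if ∑ s, y s = M then (1:ℝ) else 0) *
        (∏ q ∈ (univ.filter (fun q => y q = 1)).erase j, gamBar q (n q))) * key
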